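/- For all p, q ∈ ℝ³, |q⁰p - p⁰q| ≤ 2 min(p⁰, q⁰) |p-q|, where p⁰ = √(1+|p|²), q⁰ = √(1+|q|²). -/

import Mathlib

noncomputable section
open Matrix MeasureTheory

abbrev E3 := EuclideanSpace ℝ (Fin 3)

/-- the energy p⁰ = √(1+|p|²) -/
def en (p : E3) : ℝ := Real.sqrt (1 + ‖p‖^2)

/-- the cross product p × q -/
def cross3 (p q : E3) : E3 :=
  (WithLp.equiv 2 (Fin 3 → ℝ)).symm
    ![p 1 * q 2 - p 2 * q 1, p 2 * q 0 - p 0 * q 2, p 0 * q 1 - p 1 * q 0]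

/-- the relative momentum ρ(p,q) = p⁰q⁰ - p·q - 1 -/
def rel (p q : E3) : ℝ := en p * en q - (inner ℝ p q : ℝ) - 1

lemma en_sq (p : E3) : en p ^ 2 = 1 + ‖p‖ ^ 2 := Real.sq_sqrt (by positivity)

lemma en_nonneg (p : E3) : 0 ≤ en p := Real.sqrt_nonneg _

lemma norm_le_en (p : E3) : ‖p‖ ≤ en p := by
  nlinarith [en_sq p, en_nonneg p, norm_nonneg p]

lemma en_sub_abs_le (p q : E3) : |en p - en q| ≤ ‖p - q‖ := by
  have hab : |‖p‖ - ‖q‖| ≤ ‖p - q‖ := abs_norm_sub_norm_le p q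
  rw [abs_sub_le_iff] at hab ⊢
  constructor <;>
  nlinarith [en_sq p, en_sq q, en_nonneg p, en_nonneg q, norm_le_en p, norm_le_en q,
    norm_nonneg p, norm_nonneg q, hab.1, hab.2]

lemma key (p q : E3) : ‖en q • p - en p • q‖ ≤ 2 * en q * ‖p - q‖ := by
  have h : en q • p - en p • q = en q • (p - q) + (en q - en p) • q := by
    module
  rw [h]
  calc ‖en q • (p - q) + (en q - en p) • q‖
      ≤ ‖en q • (p - q)‖ + ‖(en q - en p) • q‖ := norm_add_le _ _
    _ = en q * ‖p - q‖ + |en q - en p| * ‖q‖ := by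
        rw [norm_smul, norm_smul, Real.norm_eq_abs, Real.norm_eq_abs,
          abs_of_nonneg (en_nonneg q)]
    _ ≤ 2 * en q * ‖p - q‖ := by
        nlinarith [en_sub_abs_le q p, abs_sub_comm (en q) (en p), norm_le_en q,
          norm_nonneg (p - q), norm_nonneg q, abs_nonneg (en q - en p), norm_sub_rev p q]

theorem weighted_diff_bound (p q : E3) :
    ‖en q • p - en p • q‖ ≤ 2 * min (en p) (en q) * ‖p - q‖ := by
  rcases min_cases (en p) (en q) with ⟨h, _⟩ | ⟨h, _⟩
  · rw [h]
    have := key q p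
    rw [norm_sub_rev, norm_sub_rev q p] at this
    exact this
  · rw [h]; exact key p q
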